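/- Let (I, e, d, D, N, θ, (τ_a)) and (I′, e′, d′, D′, N, θ′, (τ′_a)) be two Gauss-sum data with the same integer N, let n be an integer coprime to N and ñ an integer with n·ñ ≡ 1 (mod N), and let (σ, γ, π) and (σ, γ, π′) be Galois symmetries of the two data with the same ring automorphism σ of ℂ and the same γ ∈ ℂ. Suppose there is a real number d_A > 0 such that σ(d_A) is a positive real number, τ′₁ = τ₁ / d_A, and D′ = D / d_A². Then τ′_n = (σ(d_A) / d_A²) · τ_n. In particular, if τ₁ ≠ 0, then τ_n and τ′_n are both nonzero and τ′_n / |τ′_n| = τ_n / |τ_n|. -/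

import Mathlib

lemma aux_zpow_congr {x : ℂ} {N : ℕ} (hN : 1 ≤ N) (hx : x ^ N = 1)
    {a b : ℤ} (h : (N : ℤ) ∣ a - b) : x ^ a = x ^ b := by
  have hx0 : x ≠ 0 := by
    intro h0
    rw [h0, zero_pow (by omega)] at hx
    exact one_ne_zero hx.symm
  obtain ⟨c, hc⟩ := h
  have hab : a = b + N * c := by omega
  rw [hab, zpow_add₀ hx0, zpow_mul, zpow_natCast, hx, one_zpow, mul_one]

lemma aux_tau_formula {ι : Type*} [Fintype ι]
    (d : ι → ℝ) (D : ℝ) (hD0 : (D : ℂ) ≠ 0)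
    (N : ℕ) (hN : 1 ≤ N)
    (θ : ι → ℂ) (hθN : ∀ X, θ X ^ N = 1)
    (τ : ℤ → ℂ) (hτ : ∀ a : ℤ, τ a = ∑ X, θ X ^ a * ((d X : ℂ)) ^ 2)
    (n nt : ℤ) (hnt : (N : ℤ) ∣ (n * nt - 1))
    (σ : ℂ ≃+* ℂ) (σθ : ∀ x : ℂ, x ^ N = 1 → σ x = x ^ nt)
    (γ : ℂ) (hγ0 : γ ≠ 0)
    (g : ι ≃ ι)
    (hgd : ∀ X, σ (((d X : ℂ)) ^ 2 / (D : ℂ)) = ((d (g X) : ℂ)) ^ 2 / (D : ℂ))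
    (hgθ : ∀ X, σ (σ (θ X / γ)) = θ (g X) / γ) :
    τ n = (γ / σ (σ γ)) ^ n * ((D : ℂ) / σ (D : ℂ)) * σ (τ 1) := by
  have hσσγ : σ (σ γ) ≠ 0 := by simp [hγ0]
  have hσD : σ (D : ℂ) ≠ 0 := by simp [hD0]
  have hterm : ∀ X : ι, θ (g X) ^ n * ((d (g X) : ℂ)) ^ 2 =
      (γ / σ (σ γ)) ^ n * ((D : ℂ) / σ (D : ℂ)) * σ (θ X * ((d X : ℂ)) ^ 2) := by
    intro X
    have h1 : θ (g X) = θ X ^ (nt * nt) * (γ / σ (σ γ)) := by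
      have h := hgθ X
      rw [map_div₀, map_div₀, σθ (θ X) (hθN X), map_zpow₀, σθ (θ X) (hθN X),
        ← zpow_mul] at h
      field_simp at h ⊢
      linear_combination -h
    have h2 : ((d (g X) : ℂ)) ^ 2 = (D : ℂ) * σ (((d X : ℂ)) ^ 2) / σ (D : ℂ) := by
      have h := hgd X
      rw [map_div₀] at h
      field_simp at h ⊢
      linear_combination -h
    have h3 : (θ X ^ (nt * nt)) ^ n = σ (θ X) := by
      rw [← zpow_mul, σθ (θ X) (hθN X)]
      refine aux_zpow_congr hN (hθN X) ?_
      have : nt * nt * n - nt = nt * (n * nt - 1) := by ring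
      rw [this]
      exact Dvd.dvd.mul_left hnt nt
    rw [h1, h2, mul_zpow, h3, map_mul]
    ring
  rw [hτ n, ← Equiv.sum_comp g (fun X => θ X ^ n * ((d X : ℂ)) ^ 2)]
  simp only [hterm]
  rw [← Finset.mul_sum, ← map_sum, hτ 1]
  simp only [zpow_one]

lemma aux_sigma_root (σ : ℂ ≃+* ℂ) (N : ℕ) (hN : 1 ≤ N) (nt : ℤ)
    (hσ : σ (Complex.exp (2 * (Real.pi : ℂ) * Complex.I / N)) =
      Complex.exp (2 * (Real.pi : ℂ) * Complex.I * nt / N))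
    {x : ℂ} (hx : x ^ N = 1) : σ x = x ^ nt := by
  have hN0 : (N : ℕ) ≠ 0 := by omega
  have : NeZero N := ⟨hN0⟩
  have hζ : IsPrimitiveRoot (Complex.exp (2 * Real.pi * Complex.I / N)) N :=
    Complex.isPrimitiveRoot_exp N hN0
  obtain ⟨i, hi, hix⟩ := hζ.eq_pow_of_pow_eq_one hx
  set ζ := Complex.exp (2 * Real.pi * Complex.I / N) with hζdef
  have hσζ : σ ζ = ζ ^ nt := by
    rw [hσ]
    rw [← Complex.exp_int_mul]
    congr 1
    ring
  rw [← hix, map_pow, hσζ]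
  rw [← zpow_natCast (ζ ^ nt) i, ← zpow_mul, mul_comm, zpow_mul, zpow_natCast]

theorem higher_gauss_sum_local_modules
    {ι ι' : Type*} [Fintype ι] [Fintype ι'] (e : ι) (e' : ι')
    (d : ι → ℝ) (hd : ∀ X, d X ≠ 0)
    (d' : ι' → ℝ) (hd' : ∀ X, d' X ≠ 0)
    (D : ℝ) (hD : D = ∑ X, (d X) ^ 2)
    (D' : ℝ) (hD' : D' = ∑ X, (d' X) ^ 2)
    (N : ℕ) (hN : 1 ≤ N)
    (θ : ι → ℂ) (hθe : θ e = 1) (hθN : ∀ X, θ X ^ N = 1)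
    (θ' : ι' → ℂ) (hθe' : θ' e' = 1) (hθN' : ∀ X, θ' X ^ N = 1)
    (τ : ℤ → ℂ) (hτ : ∀ a : ℤ, τ a = ∑ X, θ X ^ a * ((d X : ℂ)) ^ 2)
    (τ' : ℤ → ℂ) (hτ' : ∀ a : ℤ, τ' a = ∑ X, θ' X ^ a * ((d' X : ℂ)) ^ 2)
    (n nt : ℤ) (hn : Int.gcd n N = 1) (hnt : (N : ℤ) ∣ (n * nt - 1))
    (σ : ℂ ≃+* ℂ)
    (hσ : σ (Complex.exp (2 * (Real.pi : ℂ) * Complex.I / N)) =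
      Complex.exp (2 * (Real.pi : ℂ) * Complex.I * nt / N))
    (γ : ℂ) (hγ0 : γ ≠ 0)
    (hγ : γ ^ 3 * (Real.sqrt D : ℂ) = τ 1)
    (hγ' : γ ^ 3 * (Real.sqrt D' : ℂ) = τ' 1)
    (g : ι ≃ ι)
    (hgd : ∀ X, σ (((d X : ℂ)) ^ 2 / (D : ℂ)) = ((d (g X) : ℂ)) ^ 2 / (D : ℂ))
    (hgθ : ∀ X, σ (σ (θ X / γ)) = θ (g X) / γ)
    (g' : ι' ≃ ι')
    (hgd' : ∀ X, σ (((d' X : ℂ)) ^ 2 / (D' : ℂ)) = ((d' (g' X) : ℂ)) ^ 2 / (D' : ℂ))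
    (hgθ' : ∀ X, σ (σ (θ' X / γ)) = θ' (g' X) / γ)
    (dA : ℝ) (hdA : 0 < dA)
    (hσdA : ∃ r : ℝ, 0 < r ∧ σ (dA : ℂ) = (r : ℂ))
    (hτ'1 : τ' 1 = τ 1 / (dA : ℂ))
    (hDD' : D' = D / dA ^ 2) :
    τ' n = (σ (dA : ℂ) / (dA : ℂ) ^ 2) * τ n ∧
    (τ 1 ≠ 0 → τ n ≠ 0 ∧ τ' n ≠ 0 ∧
      τ' n / (‖τ' n‖ : ℂ) = τ n / (‖τ n‖ : ℂ)) := by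
  have hDpos : 0 < D := by
    rw [hD]
    exact Finset.sum_pos (fun X _ => pow_two_pos_of_ne_zero (hd X)) ⟨e, Finset.mem_univ e⟩
  have hD'pos : 0 < D' := by
    rw [hD']
    exact Finset.sum_pos (fun X _ => pow_two_pos_of_ne_zero (hd' X)) ⟨e', Finset.mem_univ e'⟩
  have hDc : (D : ℂ) ≠ 0 := by exact_mod_cast hDpos.ne'
  have hD'c : (D' : ℂ) ≠ 0 := by exact_mod_cast hD'pos.ne'
  have σθ : ∀ x : ℂ, x ^ N = 1 → σ x = x ^ nt := fun x hx => aux_sigma_root σ N hN nt hσ hx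
  have key := aux_tau_formula d D hDc N hN θ hθN τ hτ n nt hnt σ σθ γ hγ0 g hgd hgθ
  have key' := aux_tau_formula d' D' hD'c N hN θ' hθN' τ' hτ' n nt hnt σ σθ γ hγ0 g' hgd' hgθ'
  have hdAc : (dA : ℂ) ≠ 0 := by exact_mod_cast hdA.ne'
  have hσdA0 : σ (dA : ℂ) ≠ 0 := by simp [hdAc]
  have hσσγ : σ (σ γ) ≠ 0 := by simp [hγ0]
  have hσD : σ (D : ℂ) ≠ 0 := by simp [hDc]
  have hDD'c : (D' : ℂ) = (D : ℂ) / (dA : ℂ) ^ 2 := by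
    rw [hDD']
    push_cast
    ring
  have hmain : τ' n = (σ (dA : ℂ) / (dA : ℂ) ^ 2) * τ n := by
    rw [key', key, hτ'1, hDD'c, map_div₀ σ (τ 1), map_div₀ σ, map_pow]
    field_simp [hσdA0]
  refine ⟨hmain, fun hτ1 => ?_⟩
  have hστ1 : σ (τ 1) ≠ 0 := by simp [hτ1]
  have hτn0 : τ n ≠ 0 := by
    rw [key]
    exact mul_ne_zero (mul_ne_zero (zpow_ne_zero n (div_ne_zero hγ0 hσσγ))
      (div_ne_zero hDc hσD)) hστ1
  obtain ⟨r, hr, hre⟩ := hσdA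
  have hτ'n0 : τ' n ≠ 0 := by
    rw [hmain, hre]
    exact mul_ne_zero (div_ne_zero (by exact_mod_cast hr.ne') (pow_ne_zero 2 hdAc)) hτn0
  refine ⟨hτn0, hτ'n0, ?_⟩
  have ht : (0:ℝ) < r / dA ^ 2 := div_pos hr (pow_pos hdA 2)
  have htc : σ (dA : ℂ) / (dA : ℂ) ^ 2 = ((r / dA ^ 2 : ℝ) : ℂ) := by
    rw [hre]; push_cast; ring
  rw [hmain, htc]
  rw [norm_mul, Complex.norm_real, Real.norm_of_nonneg ht.le]
  have habs : ((‖τ n‖ : ℝ) : ℂ) ≠ 0 := by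
    simpa using hτn0
  have hrc : (r : ℂ) ≠ 0 := by exact_mod_cast hr.ne'
  push_cast
  field_simp
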